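/- Let f : ℝ → ℝ be continuous, nonnegative and bounded above on [0, ∞), let h : ℝ → ℝ be nonnegative with h(u) → 0 as u → ∞, and let 0 ≤ b < 1. Suppose that for all real numbers s, t with 0 ≤ s ≤ t, f(t) ≤ h(t−s)·sup_{τ ∈ [0,s]} f(τ) + b·sup_{τ ∈ [s,t]} f(τ). Then f(t) → 0 as t → ∞. -/

import Mathlib

/-- Mechanism of the asymptotic part of Theorem 3.3(i) (Eqs. (3.19)–(3.23)): if `f` is
continuous, nonnegative and bounded above on `[0,∞)`, `h ≥ 0` with `h(u) → 0` as
`u → ∞`, `0 ≤ b < 1`, and `f(t) ≤ h(t−s)·sup_{[0,s]} f + b·sup_{[s,t]} f` whenever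
`0 ≤ s ≤ t`, then `f(t) → 0` as `t → ∞`. -/
theorem tendsto_zero_of_split_sup_bound (f : ℝ → ℝ) (hf : Continuous f)
    (hf0 : ∀ t : ℝ, 0 ≤ f t) (hfb : BddAbove (f '' Set.Ici 0))
    (h : ℝ → ℝ) (hh0 : ∀ u : ℝ, 0 ≤ h u) (hh : Filter.Tendsto h Filter.atTop (nhds 0))
    (b : ℝ) (hb0 : 0 ≤ b) (hb1 : b < 1)
    (hbound : ∀ s t : ℝ, 0 ≤ s → s ≤ t →
      f t ≤ h (t - s) * sSup (f '' Set.Icc 0 s) + b * sSup (f '' Set.Icc s t)) :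
    Filter.Tendsto f Filter.atTop (nhds 0) := by
  set M := sSup (f '' Set.Ici 0) with hMdef
  have hMb : ∀ t, 0 ≤ t → f t ≤ M := fun t ht => le_csSup hfb ⟨t, ht, rfl⟩
  have hM0 : 0 ≤ M := le_trans (hf0 0) (hMb 0 le_rfl)
  have hg_bdd : ∀ s : ℝ, 0 ≤ s → BddAbove (f '' Set.Ici s) :=
    fun s hs => hfb.mono (Set.image_mono (f := f) (Set.Ici_subset_Ici.2 hs))
  set g : ℝ → ℝ := fun s => sSup (f '' Set.Ici s) with hgdef
  have hgM : ∀ s, 0 ≤ s → g s ≤ M := by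
    intro s hs
    refine csSup_le (Set.Nonempty.image f ⟨s, Set.mem_Ici.2 le_rfl⟩) ?_
    rintro x ⟨t, ht, rfl⟩
    exact hMb t (le_trans hs ht)
  have hfg : ∀ s t, 0 ≤ s → s ≤ t → f t ≤ g s := fun s t hs hst =>
    le_csSup (hg_bdd s hs) ⟨t, hst, rfl⟩
  rw [Metric.tendsto_atTop]
  intro ε hε
  have hb1' : 0 < 1 - b := by linarith
  set ε' := ε * (1 - b) / (2 * (M + 1)) with hε'def
  have hε'0 : 0 < ε' := by positivity
  obtain ⟨S0, hS0⟩ := Filter.eventually_atTop.1 (hh.eventually (gt_mem_nhds hε'0))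
  set S := max S0 0 with hSdef
  have hS_nonneg : 0 ≤ S := le_max_right _ _
  have hSsmall : ∀ u, S ≤ u → h u < ε' := fun u hu => hS0 u (le_trans (le_max_left _ _) hu)
  -- key step
  have key : ∀ s, 0 ≤ s → g (s + S) ≤ ε' * M + b * g s := by
    intro s hs
    refine csSup_le (Set.Nonempty.image f ⟨s + S, Set.mem_Ici.2 le_rfl⟩) ?_
    rintro x ⟨t, ht, rfl⟩
    have hst : s ≤ t := by simp only [Set.mem_Ici] at ht; linarith
    have h1 := hbound s t hs hst
    have hIcc_sub : Set.Icc 0 s ⊆ Set.Ici (0:ℝ) := Set.Icc_subset_Ici_self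
    have hbdd1 : BddAbove (f '' Set.Icc 0 s) := hfb.mono (Set.image_mono (f := f) hIcc_sub)
    have hsup1_nonneg : 0 ≤ sSup (f '' Set.Icc 0 s) :=
      le_trans (hf0 0) (le_csSup hbdd1 ⟨0, ⟨le_rfl, hs⟩, rfl⟩)
    have hsup1_le : sSup (f '' Set.Icc 0 s) ≤ M := by
      refine csSup_le (Set.Nonempty.image f ⟨0, le_rfl, hs⟩) ?_
      rintro x ⟨τ, hτ, rfl⟩
      exact hMb τ hτ.1
    have hsup2_le : sSup (f '' Set.Icc s t) ≤ g s := by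
      refine csSup_le (Set.Nonempty.image f ⟨s, le_rfl, hst⟩) ?_
      rintro x ⟨τ, hτ, rfl⟩
      exact hfg s τ hs hτ.1
    have hht : h (t - s) < ε' := hSsmall (t - s) (by simp only [Set.mem_Ici] at ht; linarith)
    have h2 : h (t - s) * sSup (f '' Set.Icc 0 s) ≤ ε' * M :=
      mul_le_mul hht.le hsup1_le hsup1_nonneg hε'0.le
    have h3 : b * sSup (f '' Set.Icc s t) ≤ b * g s :=
      mul_le_mul_of_nonneg_left hsup2_le hb0
    linarith
  -- iterate
  have iter : ∀ n : ℕ, g ((n : ℝ) * S) ≤ ε' * M / (1 - b) + b ^ n * M := by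
    intro n
    induction n with
    | zero =>
      have : g 0 ≤ M := hgM 0 le_rfl
      have hnn : 0 ≤ ε' * M / (1 - b) := by positivity
      simpa using by linarith
    | succ n ih =>
      have hns : (0:ℝ) ≤ (n : ℝ) * S := by positivity
      have hk := key ((n : ℝ) * S) hns
      have hcast : ((n + 1 : ℕ) : ℝ) * S = (n : ℝ) * S + S := by push_cast; ring
      rw [hcast]
      have hmul : b * g ((n : ℝ) * S) ≤ b * (ε' * M / (1 - b) + b ^ n * M) :=
        mul_le_mul_of_nonneg_left ih hb0
      have hfield : ε' * M + b * (ε' * M / (1 - b)) = ε' * M / (1 - b) := by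
        field_simp
        ring
      have hpow : b * (b ^ n * M) = b ^ (n + 1) * M := by ring
      linarith
  -- choose n
  have hεM : ε' * M / (1 - b) < ε / 2 := by
    rw [hε'def]
    rw [div_lt_iff₀ hb1']
    have hM1 : (0:ℝ) < M + 1 := by linarith
    rw [div_mul_eq_mul_div, div_mul_eq_mul_div, div_lt_iff₀ (by positivity)]
    nlinarith
  have hpowlim : Filter.Tendsto (fun n : ℕ => b ^ n * M) Filter.atTop (nhds 0) := by
    simpa using (tendsto_pow_atTop_nhds_zero_of_lt_one hb0 hb1).mul_const M
  obtain ⟨n, hn⟩ := (hpowlim.eventually (gt_mem_nhds (by linarith : (0:ℝ) < ε / 2))).exists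
  refine ⟨(n : ℝ) * S, fun t ht => ?_⟩
  have hns : (0:ℝ) ≤ (n : ℝ) * S := by positivity
  have hft : f t ≤ g ((n : ℝ) * S) := hfg _ t hns ht
  have := iter n
  rw [Real.dist_eq, sub_zero, abs_of_nonneg (hf0 t)]
  linarith
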